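/- For Re α > 0, a > 0 and p ∈ ℝ, ∫₀^a x^{α−1} (a−x)^{α−1} e^{−px} dx = √π Γ(α) (a/p)^{α−1/2} e^{−ap/2} I_{α−1/2}(ap/2), where I_ν is the modified Bessel function of the first kind. -/

import Mathlib

set_option maxRecDepth 4000

open MeasureTheory Set

/-- Modified Bessel function of the first kind. -/
noncomputable def besselI (ν x : ℝ) : ℝ :=
  ∑' k : ℕ, (1 / ((k.factorial : ℝ) * Real.Gamma (ν + k + 1))) *
    (x / 2) ^ (2 * (k : ℝ) + ν)

lemma realBeta_intervalIntegrable {u v : ℝ} (hu : 0 < u) (hv : 0 < v) :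
    IntervalIntegrable (fun x : ℝ => x ^ (u-1) * (1-x) ^ (v-1)) volume 0 1 := by
  have h := Complex.betaIntegral_convergent (u := (u:ℂ)) (v := (v:ℂ)) (by simpa) (by simpa)
  rw [intervalIntegrable_iff_integrableOn_Ioc_of_le (by norm_num)] at h ⊢
  have h2 := h.re
  apply MeasureTheory.IntegrableOn.congr_fun h2 ?_ measurableSet_Ioc
  intro x hx
  simp only
  rw [show ((u:ℂ)-1) = ((u-1:ℝ):ℂ) by push_cast; ring,
      show (1-(x:ℂ)) = ((1-x:ℝ):ℂ) by push_cast; ring,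
      show ((v:ℂ)-1) = ((v-1:ℝ):ℂ) by push_cast; ring,
      ← Complex.ofReal_cpow hx.1.le, ← Complex.ofReal_cpow (by linarith [hx.2] : (0:ℝ) ≤ 1 - x),
      ← Complex.ofReal_mul]
  simp

lemma realBeta_eq {u v : ℝ} (hu : 0 < u) (hv : 0 < v) :
    ∫ x in (0:ℝ)..1, x ^ (u-1) * (1-x) ^ (v-1)
      = Real.Gamma u * Real.Gamma v / Real.Gamma (u+v) := by
  have h := Complex.Gamma_mul_Gamma_eq_betaIntegral (s := (u:ℂ)) (t := (v:ℂ)) (by simpa) (by simpa)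
  have hB : Complex.betaIntegral u v = ((∫ x in (0:ℝ)..1, x ^ (u-1) * (1-x) ^ (v-1) : ℝ) : ℂ) := by
    rw [Complex.betaIntegral, ← intervalIntegral.integral_ofReal]
    apply intervalIntegral.integral_congr
    intro x hx
    rw [Set.uIcc_of_le (by norm_num : (0:ℝ) ≤ 1)] at hx
    simp only
    rw [show ((u:ℂ)-1) = ((u-1:ℝ):ℂ) by push_cast; ring,
        show (1-(x:ℂ)) = ((1-x:ℝ):ℂ) by push_cast; ring,
        show ((v:ℂ)-1) = ((v-1:ℝ):ℂ) by push_cast; ring,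
        ← Complex.ofReal_cpow hx.1, ← Complex.ofReal_cpow (by linarith [hx.2] : (0:ℝ) ≤ 1 - x),
        ← Complex.ofReal_mul]
  rw [hB, show ((u:ℂ)+(v:ℂ)) = ((u+v:ℝ):ℂ) by push_cast; ring] at h
  rw [Complex.Gamma_ofReal, Complex.Gamma_ofReal, Complex.Gamma_ofReal, ← Complex.ofReal_mul,
    ← Complex.ofReal_mul] at h
  have := Complex.ofReal_injective h
  have hne : Real.Gamma (u+v) ≠ 0 := (Real.Gamma_pos_of_pos (by linarith)).ne'
  field_simp
  linarith [this]

lemma Gamma_nat_add_half (k : ℕ) :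
    Real.Gamma ((k:ℝ) + 1/2) = Real.sqrt Real.pi * (2*k).factorial / (4^k * k.factorial) := by
  induction k with
  | zero => simpa using Real.Gamma_one_half_eq
  | succ n ih =>
    have h1 : ((n+1:ℕ):ℝ) + 1/2 = ((n:ℝ) + 1/2) + 1 := by push_cast; ring
    rw [h1, Real.Gamma_add_one (by positivity), ih]
    have h2 : (2*(n+1)) = (2*n+1)+1 := by ring
    rw [h2, Nat.factorial_succ, Nat.factorial_succ, Nat.factorial_succ]
    push_cast
    field_simp
    ring

lemma sq_image_Ioo : (fun u : ℝ => u^2) '' Set.Ioo 0 1 = Set.Ioo 0 1 := by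
  ext v
  constructor
  · rintro ⟨u, hu, rfl⟩
    exact ⟨pow_pos hu.1 2, pow_lt_one₀ hu.1.le hu.2 two_ne_zero⟩
  · rintro hv
    exact ⟨Real.sqrt v, ⟨Real.sqrt_pos.2 hv.1,
      by nlinarith [Real.sq_sqrt hv.1.le, Real.sqrt_nonneg v, hv.2]⟩, Real.sq_sqrt hv.1.le⟩

lemma sq_injOn : Set.InjOn (fun u : ℝ => u^2) (Set.Ioo 0 1) := by
  intro a ha b hb h
  simp only at h
  nlinarith [ha.1, hb.1]

lemma subst_sq {α : ℝ} (k : ℕ) :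
    ∫ v in Set.Ioo (0:ℝ) 1, v ^ ((k:ℝ)-1/2) * (1-v) ^ (α-1)
      = ∫ u in Set.Ioo (0:ℝ) 1, 2 * (u^(2*k) * (1-u^2) ^ (α-1)) := by
  rw [← sq_image_Ioo, integral_image_eq_integral_abs_deriv_smul measurableSet_Ioo
      (fun x _ => by simpa using (hasDerivAt_pow 2 x).hasDerivWithinAt) sq_injOn, sq_image_Ioo]
  apply setIntegral_congr_fun measurableSet_Ioo
  intro u hu
  simp only [smul_eq_mul]
  rw [abs_of_nonneg (by linarith [hu.1] : (0:ℝ) ≤ 2*u)]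
  have key : (u^2:ℝ) ^ ((k:ℝ)-1/2) = u^(2*k) / u := by
    rw [← Real.rpow_natCast u 2, ← Real.rpow_mul hu.1.le,
      show ((2:ℕ):ℝ) * ((k:ℝ)-1/2) = ((2*k:ℕ):ℝ) - 1 by push_cast; ring,
      Real.rpow_sub hu.1, Real.rpow_natCast, Real.rpow_one]
  rw [key]
  have hun : u ≠ 0 := hu.1.ne'
  field_simp

lemma h_integrableOn {α : ℝ} (hα : 0 < α) :
    IntegrableOn (fun u : ℝ => (1-u^2) ^ (α-1)) (Ioo (-1:ℝ) 1) := by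
  have hbeta := realBeta_intervalIntegrable hα hα
  have h1 := (hbeta.comp_mul_left (c := 1/2)).comp_add_right 1
  norm_num at h1
  rw [intervalIntegrable_iff_integrableOn_Ioc_of_le (by norm_num : (-1:ℝ) ≤ 1)] at h1
  have h2 : IntegrableOn
      (fun x : ℝ => (4:ℝ)^(α-1) * ((1/2*(x+1)) ^ (α-1) * (1-1/2*(x+1)) ^ (α-1)))
      (Ioo (-1:ℝ) 1) volume :=
    MeasureTheory.IntegrableOn.mono_set (h1.const_mul ((4:ℝ)^(α-1))) Ioo_subset_Ioc_self
  apply MeasureTheory.IntegrableOn.congr_fun h2 ?_ measurableSet_Ioo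
  intro u hu
  have h1u : (0:ℝ) ≤ 1/2*(u+1) := by nlinarith [hu.1]
  have h2u : (0:ℝ) ≤ 1-1/2*(u+1) := by nlinarith [hu.2]
  simp only
  rw [← Real.mul_rpow h1u h2u, ← Real.mul_rpow (by norm_num) (by nlinarith [hu.1, hu.2])]
  congr 1
  ring

lemma mono_integrableOn {α : ℝ} (hα : 0 < α) (m : ℕ) :
    IntegrableOn (fun u : ℝ => u^m * (1-u^2) ^ (α-1)) (Ioo (-1:ℝ) 1) := by
  apply (h_integrableOn hα).mono'
  · exact (by measurability :
      Measurable (fun u : ℝ => u^m * (1-u^2) ^ (α-1))).aestronglyMeasurable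
  · refine ae_restrict_of_forall_mem measurableSet_Ioo fun u hu => ?_
    have h2 : (0:ℝ) ≤ (1-u^2) ^ (α-1) := Real.rpow_nonneg (by nlinarith [hu.1, hu.2]) _
    rw [Real.norm_eq_abs, abs_mul, abs_pow, abs_of_nonneg h2]
    have h3 : |u| ^ m ≤ 1 := pow_le_one₀ (abs_nonneg u) (abs_le.2 ⟨hu.1.le, hu.2.le⟩)
    nlinarith [h2]

lemma exchange {α : ℝ} (hα : 0 < α) (z : ℝ) :
    ∫ u in Ioo (-1:ℝ) 1, (1-u^2) ^ (α-1) * Real.exp (-(z/2)*u)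
      = ∑' m : ℕ, ((-(z/2))^m / m.factorial) * ∫ u in Ioo (-1:ℝ) 1, u^m * (1-u^2) ^ (α-1) := by
  set F : ℕ → ℝ → ℝ :=
    fun m u => ((-(z/2))^m / m.factorial) * (u^m * (1-u^2) ^ (α-1)) with hF
  have hInt : ∀ m, Integrable (F m) (volume.restrict (Ioo (-1:ℝ) 1)) :=
    fun m => (mono_integrableOn hα m).const_mul _
  have habs : ∀ m, (∫ u in Ioo (-1:ℝ) 1, ‖F m u‖)
      ≤ ((|z|/2)^m / m.factorial) * ∫ u in Ioo (-1:ℝ) 1, (1-u^2) ^ (α-1) := by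
    intro m
    have hb : ∀ u ∈ Ioo (-1:ℝ) 1, ‖F m u‖ ≤ ((|z|/2)^m / m.factorial) * (1-u^2) ^ (α-1) := by
      intro u hu
      have h0 : (0:ℝ) ≤ 1 - u^2 := by nlinarith [hu.1, hu.2]
      have h2 : (0:ℝ) ≤ (1-u^2) ^ (α-1) := Real.rpow_nonneg h0 _
      have h3 : |u| ^ m ≤ 1 := pow_le_one₀ (abs_nonneg u) (abs_le.2 ⟨hu.1.le, hu.2.le⟩)
      have e1 : ‖F m u‖ = ((|z|/2)^m / m.factorial) * (|u|^m * (1-u^2) ^ (α-1)) := by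
        rw [hF]
        simp only [Real.norm_eq_abs, abs_mul, abs_div, abs_pow, abs_neg, abs_of_nonneg h2,
          Nat.abs_cast]
        norm_num
      rw [e1]
      have h4 : (0:ℝ) ≤ (|z|/2)^m / m.factorial := by positivity
      have h5 : |u|^m * (1-u^2) ^ (α-1) ≤ (1-u^2) ^ (α-1) := by nlinarith
      exact mul_le_mul_of_nonneg_left h5 h4
    calc (∫ u in Ioo (-1:ℝ) 1, ‖F m u‖)
        ≤ ∫ u in Ioo (-1:ℝ) 1, ((|z|/2)^m / m.factorial) * (1-u^2) ^ (α-1) := by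
          apply integral_mono_of_nonneg
          · filter_upwards with u using norm_nonneg _
          · exact ((h_integrableOn hα).const_mul _)
          · exact ae_restrict_of_forall_mem measurableSet_Ioo hb
      _ = ((|z|/2)^m / m.factorial) * ∫ u in Ioo (-1:ℝ) 1, (1-u^2) ^ (α-1) :=
          integral_const_mul _ _
  have hsum : Summable fun m : ℕ => ∫ u in Ioo (-1:ℝ) 1, ‖F m u‖ := by
    apply Summable.of_nonneg_of_le (fun m => integral_nonneg fun u => norm_nonneg _) habs
    exact (Real.summable_pow_div_factorial (|z|/2)).mul_right _
  have key := integral_tsum_of_summable_integral_norm hInt hsum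
  have hpt : ∀ u : ℝ, (1-u^2) ^ (α-1) * Real.exp (-(z/2)*u) = ∑' m, F m u := by
    intro u
    rw [Real.exp_eq_exp_ℝ, NormedSpace.exp_eq_tsum_div, ← tsum_mul_left]
    exact tsum_congr fun m => by rw [hF]; simp only [mul_pow, neg_mul]; ring
  simp_rw [hpt]
  rw [← key]
  exact tsum_congr fun m => integral_const_mul _ _

lemma Jsplit {α : ℝ} (hα : 0 < α) (m : ℕ) :
    ∫ u in Ioo (-1:ℝ) 1, u^m * (1-u^2) ^ (α-1)
      = (1 + (-1:ℝ)^m) * ∫ u in Ioo (0:ℝ) 1, u^m * (1-u^2) ^ (α-1) := by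
  have h01 : IntervalIntegrable (fun u : ℝ => u^m * (1-u^2) ^ (α-1)) volume 0 1 := by
    rw [intervalIntegrable_iff_integrableOn_Ioc_of_le (by norm_num),
      integrableOn_Ioc_iff_integrableOn_Ioo]
    exact (mono_integrableOn hα m).mono_set
      (fun x hx => ⟨by linarith [hx.1], hx.2⟩)
  have h10 : IntervalIntegrable (fun u : ℝ => u^m * (1-u^2) ^ (α-1)) volume (-1) 0 := by
    rw [intervalIntegrable_iff_integrableOn_Ioc_of_le (by norm_num)]
    exact (mono_integrableOn hα m).mono_set
      (fun x hx => ⟨hx.1, by linarith [hx.2]⟩)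
  have e0 : ∫ u in Ioo (-1:ℝ) 1, u^m * (1-u^2) ^ (α-1)
      = ∫ u in (-1:ℝ)..1, u^m * (1-u^2) ^ (α-1) := by
    rw [intervalIntegral.integral_of_le (by norm_num), integral_Ioc_eq_integral_Ioo]
  have e1 : ∫ u in Ioo (0:ℝ) 1, u^m * (1-u^2) ^ (α-1)
      = ∫ u in (0:ℝ)..1, u^m * (1-u^2) ^ (α-1) := by
    rw [intervalIntegral.integral_of_le (by norm_num), integral_Ioc_eq_integral_Ioo]
  have e2 : ∫ u in (-1:ℝ)..0, u^m * (1-u^2) ^ (α-1)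
      = (-1:ℝ)^m * ∫ u in (0:ℝ)..1, u^m * (1-u^2) ^ (α-1) := by
    have := intervalIntegral.integral_comp_neg (a := (0:ℝ)) (b := 1)
      (fun u : ℝ => u^m * (1-u^2) ^ (α-1))
    norm_num at this
    rw [← this, ← intervalIntegral.integral_const_mul]
    apply intervalIntegral.integral_congr
    intro x _
    simp only
    rw [neg_pow]
    ring
  rw [e0, e1, ← intervalIntegral.integral_add_adjacent_intervals h10 h01, e2]
  ring

lemma Jeven {α : ℝ} (hα : 0 < α) (k : ℕ) :
    ∫ u in Ioo (-1:ℝ) 1, u^(2*k) * (1-u^2) ^ (α-1)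
      = Real.Gamma ((k:ℝ)+1/2) * Real.Gamma α / Real.Gamma ((k:ℝ)+1/2+α) := by
  rw [Jsplit hα, show ((-1:ℝ))^(2*k) = 1 from Even.neg_one_pow ⟨k, by ring⟩]
  have hbeta := realBeta_eq (u := (k:ℝ)+1/2) (v := α) (by positivity) hα
  rw [show ((k:ℝ)+1/2)-1 = (k:ℝ)-1/2 by ring] at hbeta
  rw [intervalIntegral.integral_of_le (by norm_num), integral_Ioc_eq_integral_Ioo,
    subst_sq, integral_const_mul] at hbeta
  rw [← hbeta]
  ring

lemma Jodd {α : ℝ} (hα : 0 < α) (k : ℕ) :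
    ∫ u in Ioo (-1:ℝ) 1, u^(2*k+1) * (1-u^2) ^ (α-1) = 0 := by
  rw [Jsplit hα]
  have : ((-1:ℝ))^(2*k+1) = -1 := Odd.neg_one_pow ⟨k, by ring⟩
  rw [this]
  ring

theorem integral_rpow_mul_exp (α a p : ℝ) (hα : 0 < α) (ha : 0 < a) (hp : 0 < p) :
    ∫ x in (0:ℝ)..a, x ^ (α - 1) * (a - x) ^ (α - 1) * Real.exp (-p * x) =
      Real.sqrt Real.pi * Real.Gamma α * (a / p) ^ (α - 1/2) *
        Real.exp (-a * p / 2) * besselI (α - 1/2) (a * p / 2) := by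
  have hz0 : 0 < a * p := mul_pos ha hp
  have hc : a/2 ≠ 0 := by positivity
  -- Step 1: affine substitution
  have step1 : ∫ x in (0:ℝ)..a, x ^ (α - 1) * (a - x) ^ (α - 1) * Real.exp (-p * x)
      = (a/2) * ∫ u in (-1:ℝ)..1,
        ((a/2*u + a/2) ^ (α-1) * (a-(a/2*u+a/2)) ^ (α-1) * Real.exp (-p*(a/2*u+a/2))) := by
    have h := intervalIntegral.integral_comp_mul_add (a := (-1:ℝ)) (b := 1)
      (f := fun x => x ^ (α-1) * (a-x) ^ (α-1) * Real.exp (-p*x)) hc (a/2)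
    rw [show a/2*(-1)+a/2 = (0:ℝ) by ring, show a/2*1+a/2 = a by ring] at h
    rw [h, smul_eq_mul]
    field_simp
    ring
    apply intervalIntegral.integral_congr
    intro x _
    ring
  -- Step 2: pointwise rewriting
  have step2 : ∫ u in (-1:ℝ)..1,
        ((a/2*u + a/2) ^ (α-1) * (a-(a/2*u+a/2)) ^ (α-1) * Real.exp (-p*(a/2*u+a/2)))
      = ((a/2) ^ (α-1) * (a/2) ^ (α-1) * Real.exp (-(a*p/2)))
        * ∫ u in (-1:ℝ)..1, (1-u^2) ^ (α-1) * Real.exp (-(a*p/2)*u) := by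
    rw [← intervalIntegral.integral_const_mul]
    apply intervalIntegral.integral_congr
    intro u hu
    rw [Set.uIcc_of_le (by norm_num : (-1:ℝ) ≤ 1)] at hu
    have h1u : (0:ℝ) ≤ 1+u := by linarith [hu.1]
    have h2u : (0:ℝ) ≤ 1-u := by linarith [hu.2]
    have ha2 : (0:ℝ) ≤ a/2 := by linarith
    simp only
    rw [show a/2*u + a/2 = (a/2)*(1+u) by ring, show a - ((a/2)*(1+u)) = (a/2)*(1-u) by ring,
        Real.mul_rpow ha2 h1u, Real.mul_rpow ha2 h2u,
        show (1:ℝ)-u^2 = (1+u)*(1-u) by ring, Real.mul_rpow h1u h2u,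
        show -p*((a/2)*(1+u)) = (-(a*p/2)) + (-(a*p/2)*u) by ring, Real.exp_add]
    ring
  -- Step 3: to Ioo and series exchange
  have step3 : ∫ u in (-1:ℝ)..1, (1-u^2) ^ (α-1) * Real.exp (-(a*p/2)*u)
      = ∑' m : ℕ, ((-(a*p/2))^m / m.factorial)
          * ∫ u in Ioo (-1:ℝ) 1, u^m * (1-u^2) ^ (α-1) := by
    rw [intervalIntegral.integral_of_le (by norm_num), integral_Ioc_eq_integral_Ioo]
    exact exchange hα (a*p)
  set T : ℕ → ℝ := fun m => ((-(a*p/2))^m / m.factorial)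
      * ∫ u in Ioo (-1:ℝ) 1, u^m * (1-u^2) ^ (α-1) with hT
  have hTsupp : Function.support T ⊆ Set.range (fun k : ℕ => 2*k) := by
    intro m hm
    rcases Nat.even_or_odd m with ⟨j, hj⟩ | ⟨j, hj⟩
    · exact ⟨j, show 2*j = m by omega⟩
    · exfalso
      apply hm
      rw [hT]
      simp only
      rw [hj, Jodd hα]
      ring
  have hev : ∑' k : ℕ, T (2*k) = ∑' m : ℕ, T m :=
    Function.Injective.tsum_eq (fun i j h => by omega) hTsupp
  rw [step1, step2, step3, ← hev]
  rw [show -a*p/2 = -(a*p/2) by ring, besselI]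
  rw [← tsum_mul_left, ← tsum_mul_left, ← tsum_mul_left]
  apply tsum_congr
  intro k
  rw [hT]
  simp only
  rw [Jeven hα, Even.neg_pow (even_two_mul k), Gamma_nat_add_half k]
  have hG : Real.Gamma (α - 1/2 + (k:ℝ) + 1) = Real.Gamma ((k:ℝ)+1/2+α) := by
    congr 1; ring
  rw [hG]
  rw [show a*p/2/2 = a*p/4 by ring]
  have e1 : (a*p/4) ^ (2*(k:ℝ)+(α-1/2)) = (a*p/4)^(2*k) * (a*p/4)^(α-1/2) := by
    rw [Real.rpow_add (by positivity), show (2*(k:ℝ)) = ((2*k:ℕ):ℝ) by push_cast; ring,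
      Real.rpow_natCast]
  have e2 : (a/p) ^ (α-1/2) * (a*p/4) ^ (α-1/2) = ((a/2:ℝ)^(2:ℕ)) ^ (α-1/2) := by
    rw [← Real.mul_rpow (by positivity) (by positivity)]
    congr 1
    field_simp
    ring
  have e3 : ((a/2:ℝ)^(2:ℕ)) ^ (α-1/2) = (a/2) ^ (2*α-1) := by
    rw [← Real.rpow_natCast (a/2) 2, ← Real.rpow_mul (by positivity : (0:ℝ) ≤ a/2)]
    congr 1
    push_cast
    ring
  have e4 : (a/2) * ((a/2) ^ (α-1) * (a/2) ^ (α-1)) = (a/2) ^ (2*α-1) := by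
    rw [← Real.rpow_add (by positivity : (0:ℝ) < a/2) (α-1) (α-1)]
    nth_rewrite 1 [← Real.rpow_one (a/2)]
    rw [← Real.rpow_add (by positivity)]
    congr 1
    ring
  have e5 : ((a*p/2:ℝ))^(2*k) / 4^k = (a*p/4)^(2*k) := by
    rw [div_eq_iff (by positivity : ((4:ℝ))^k ≠ 0), pow_mul, pow_mul, ← mul_pow]
    congr 1
    ring
  have hGne : Real.Gamma ((k:ℝ)+1/2+α) ≠ 0 := (Real.Gamma_pos_of_pos (by positivity)).ne'
  have hfac1 : ((2*k).factorial : ℝ) ≠ 0 := Nat.cast_ne_zero.2 (Nat.factorial_ne_zero _)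
  have hfac2 : ((k).factorial : ℝ) ≠ 0 := Nat.cast_ne_zero.2 (Nat.factorial_ne_zero _)
  have hfk : ((4:ℝ))^k ≠ 0 := by positivity
  have e6 : (a/p) ^ (α-1/2) * (a*p/4) ^ (α-1/2)
      = a/2 * ((a/2) ^ (α-1) * (a/2) ^ (α-1)) := e2.trans (e3.trans e4.symm)
  rw [e1, ← e5]
  trans ((a/p) ^ (α-1/2) * (a*p/4) ^ (α-1/2) * (Real.exp (-(a*p/2)) * ((a*p/2)^(2*k))
      * Real.sqrt Real.pi * Real.Gamma α
      / (4^k * (k.factorial:ℝ) * Real.Gamma ((k:ℝ)+1/2+α))))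
  · rw [e6]
    field_simp
  · field_simp
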